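/- Suppose m ≥ 3 and λ_i = 1/m for every i ∈ I, let T_1,…,T_m and Q_1,…,Q_m be firmly nonexpansive maps on X satisfying, for every i and all z, y ∈ X, y = Q_i(z) ⟺ y = T_i(μ_i z + λ_i y). Let x_0 ∈ 𝐗 and define x_{n+1} = (J∘R)x_n for all n. If S ≠ ∅, then the sequence (x_n) converges weakly in 𝐗 to a point x = (x_i)_{i∈I} ∈ S, and the averages (1/m)Σ_{i∈I} x_{n,i} converge weakly in X to (1/m)Σ_{i∈I} x_i, which is a fixed point of the averaged resolvent, i.e. it satisfies z = (1/m)Σ_{i∈I} T_i z. -/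

import Mathlib

open Filter Topology
open scoped RealInnerProductSpace

section Hilbert
variable {H : Type*} [NormedAddCommGroup H] [InnerProductSpace ℝ H] [CompleteSpace H]

theorem exists_weak_clusterPt (x : ℕ → H) (B : ℝ) (hb : ∀ n, ‖x n‖ ≤ B)
    (L : Filter ℕ) (hL : L.NeBot) :
    ∃ (z : H) (L' : Filter ℕ), L'.NeBot ∧ L' ≤ L ∧
      ∀ u, Tendsto (fun n => ⟪x n, u⟫) L' (𝓝 ⟪z, u⟫) := by
  classical
  set φ : ℕ → WeakDual ℝ H :=
    fun n => StrongDual.toWeakDual (InnerProductSpace.toDual ℝ H (x n)) with hφ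
  have hφmem : ∀ n, φ n ∈ (WeakDual.toStrongDual ⁻¹' Metric.closedBall 0 B : Set (WeakDual ℝ H)) := by
    intro n
    simp only [Set.mem_preimage, Metric.mem_closedBall, dist_zero_right, hφ]
    calc ‖WeakDual.toStrongDual (StrongDual.toWeakDual (InnerProductSpace.toDual ℝ H (x n)))‖
        = ‖InnerProductSpace.toDual ℝ H (x n)‖ := rfl
      _ = ‖x n‖ := (InnerProductSpace.toDual ℝ H).norm_map (x n)
      _ ≤ B := hb n
  have hmapmem : Filter.map φ L ≤ 𝓟 (WeakDual.toStrongDual ⁻¹' Metric.closedBall (0 : StrongDual ℝ H) B) := by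
    rw [le_principal_iff, mem_map]
    filter_upwards with n using hφmem n
  haveI : (Filter.map φ L).NeBot := Filter.map_neBot
  obtain ⟨φ₀, _, hcl⟩ := (WeakDual.isCompact_closedBall (0 : StrongDual ℝ H) B).exists_clusterPt hmapmem
  set L' := L ⊓ Filter.comap φ (𝓝 φ₀) with hL'
  have hmapeq : Filter.map φ L' = Filter.map φ L ⊓ 𝓝 φ₀ := Filter.push_pull φ L (𝓝 φ₀)
  have hne : L'.NeBot := by
    rw [← Filter.map_neBot_iff φ, hmapeq]
    rw [inf_comm]
    exact hcl
  have htend : Tendsto φ L' (𝓝 φ₀) := by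
    rw [Filter.tendsto_iff_comap]
    exact inf_le_right
  refine ⟨(InnerProductSpace.toDual ℝ H).symm (WeakDual.toStrongDual φ₀), L', hne, inf_le_left, ?_⟩
  intro u
  have hev : Tendsto (fun n => φ n u) L' (𝓝 (φ₀ u)) :=
    (WeakDual.eval_continuous u).continuousAt.tendsto.comp htend
  have h1 : ∀ n, φ n u = ⟪x n, u⟫ := fun n => InnerProductSpace.toDual_apply_apply
  have h2 : ⟪(InnerProductSpace.toDual ℝ H).symm (WeakDual.toStrongDual φ₀), u⟫ = φ₀ u :=
    InnerProductSpace.toDual_symm_apply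
  simp only [h1] at hev
  rw [h2]
  exact hev

theorem weak_conv_of_averaged (F : H → H) (κ : ℝ) (hκ : 0 < κ)
    (hF : ∀ a b, ‖F a - F b‖ ^ 2 + κ * ‖(a - F a) - (b - F b)‖ ^ 2 ≤ ‖a - b‖ ^ 2)
    (q : H) (hq : F q = q) (x : ℕ → H) (hx : ∀ n, x (n + 1) = F (x n)) :
    ∃ p, F p = p ∧ ∀ u, Tendsto (fun n => ⟪x n, u⟫) atTop (𝓝 ⟪p, u⟫) := by
  -- nonexpansiveness
  have hne : ∀ a b, ‖F a - F b‖ ≤ ‖a - b‖ := by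
    intro a b
    have h := hF a b
    nlinarith [norm_nonneg (F a - F b), norm_nonneg (a - b),
      sq_nonneg ‖(a - F a) - (b - F b)‖]
  -- Fejér monotonicity
  have hfej : ∀ z, F z = z → ∀ n,
      ‖x (n + 1) - z‖ ^ 2 + κ * ‖x n - x (n + 1)‖ ^ 2 ≤ ‖x n - z‖ ^ 2 := by
    intro z hz n
    have h := hF (x n) z
    rw [hz, ← hx n] at h
    simpa using h
  have hanti : ∀ z, F z = z → Antitone fun n => ‖x n - z‖ ^ 2 := by
    intro z hz
    refine antitone_nat_of_succ_le fun n => ?_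
    have := hfej z hz n
    nlinarith [sq_nonneg ‖x n - x (n + 1)‖]
  have hDlim : ∀ z, F z = z → ∃ ℓ, Tendsto (fun n => ‖x n - z‖ ^ 2) atTop (𝓝 ℓ) := by
    intro z hz
    exact ⟨_, tendsto_atTop_ciInf (hanti z hz) ⟨0, by rintro a ⟨n, rfl⟩; positivity⟩⟩
  -- boundedness
  set B : ℝ := ‖q‖ + ‖x 0 - q‖ with hB
  have hb : ∀ n, ‖x n‖ ≤ B := by
    intro n
    have h1 : ‖x n - q‖ ^ 2 ≤ ‖x 0 - q‖ ^ 2 := hanti q hq (Nat.zero_le n)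
    have h2 : ‖x n - q‖ ≤ ‖x 0 - q‖ := by
      nlinarith [norm_nonneg (x n - q), norm_nonneg (x 0 - q)]
    calc ‖x n‖ = ‖q + (x n - q)‖ := by rw [add_sub_cancel]
      _ ≤ ‖q‖ + ‖x n - q‖ := norm_add_le _ _
      _ ≤ B := by rw [hB]; linarith
  have hbz : ∀ z : H, ∀ n, ‖x n - z‖ ≤ B + ‖z‖ := by
    intro z n
    calc ‖x n - z‖ ≤ ‖x n‖ + ‖z‖ := norm_sub_le _ _
      _ ≤ B + ‖z‖ := by linarith [hb n]
  -- asymptotic regularity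
  have ha : Tendsto (fun n => ‖x n - x (n + 1)‖) atTop (𝓝 0) := by
    obtain ⟨ℓ, hℓ⟩ := hDlim q hq
    have h1 : Tendsto (fun n => ‖x n - q‖ ^ 2 - ‖x (n + 1) - q‖ ^ 2) atTop (𝓝 0) := by
      have := hℓ.sub (hℓ.comp (tendsto_add_atTop_nat 1))
      simpa using this
    have hsq : Tendsto (fun n => ‖x n - x (n + 1)‖ ^ 2) atTop (𝓝 0) := by
      have h2 := h1.const_mul κ⁻¹
      rw [mul_zero] at h2
      refine squeeze_zero (fun n => sq_nonneg _) (fun n => ?_) h2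
      have h := hfej q hq n
      rw [inv_mul_eq_div, le_div_iff₀ hκ]
      nlinarith
    have := hsq.sqrt
    simpa [Real.sqrt_sq (norm_nonneg _)] using this
  -- demiclosedness
  have hdemi : ∀ L : Filter ℕ, L.NeBot → L ≤ atTop → ∀ z,
      (∀ u, Tendsto (fun n => ⟪x n, u⟫) L (𝓝 ⟪z, u⟫)) → F z = z := by
    intro L hL hLle z hzc
    set w := z - F z with hw
    set g : ℕ → ℝ := fun n =>
      -2 * (⟪x n, w⟫ - ⟪z, w⟫) + 2 * ‖x n - x (n + 1)‖ * (B + ‖z‖) + ‖x n - x (n + 1)‖ ^ 2 with hg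
    have key : ∀ n, ‖w‖ ^ 2 ≤ g n := by
      intro n
      have h1 : ‖x n - F z‖ ≤ ‖x n - x (n + 1)‖ + ‖x n - z‖ := by
        calc ‖x n - F z‖ = ‖(x n - x (n + 1)) + (F (x n) - F z)‖ := by
              rw [hx n]; congr 1; abel
          _ ≤ ‖x n - x (n + 1)‖ + ‖F (x n) - F z‖ := norm_add_le _ _
          _ ≤ ‖x n - x (n + 1)‖ + ‖x n - z‖ := by linarith [hne (x n) z]
      have h2 : ‖x n - F z‖ ^ 2 = ‖x n - z‖ ^ 2 + 2 * ⟪x n - z, w⟫ + ‖w‖ ^ 2 := by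
        have he : x n - F z = (x n - z) + w := by rw [hw]; abel
        rw [he, norm_add_sq_real]
      have h3 : ⟪x n - z, w⟫ = ⟪x n, w⟫ - ⟪z, w⟫ := inner_sub_left _ _ _
      have h4 := hbz z n
      have h5 : (0:ℝ) ≤ ‖x n - x (n + 1)‖ := norm_nonneg _
      have h6 : (0:ℝ) ≤ ‖x n - z‖ := norm_nonneg _
      simp only [hg]
      nlinarith [h1, h2, pow_le_pow_left₀ (norm_nonneg (x n - F z)) h1 2,
        mul_le_mul_of_nonneg_left h4 h5]
    have hg0 : Tendsto g L (𝓝 0) := by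
      have t1 : Tendsto (fun n => ⟪x n, w⟫ - ⟪z, w⟫) L (𝓝 0) := by
        have := (hzc w).sub_const ⟪z, w⟫
        simpa using this
      have t2 : Tendsto (fun n => ‖x n - x (n + 1)‖) L (𝓝 0) := ha.mono_left hLle
      have : Tendsto g L (𝓝 (-2 * 0 + 2 * 0 * (B + ‖z‖) + 0 ^ 2)) := by
        exact ((t1.const_mul (-2)).add ((t2.const_mul 2).mul_const (B + ‖z‖))).add (t2.pow 2)
      simpa using this
    have hle : ‖w‖ ^ 2 ≤ 0 := ge_of_tendsto hg0 (Filter.Eventually.of_forall key)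
    have : ‖w‖ = 0 := by nlinarith [norm_nonneg w]
    have : w = 0 := norm_eq_zero.mp this
    rw [hw, sub_eq_zero] at this
    exact this.symm
  -- uniqueness of weak cluster points
  have huniq : ∀ z₁ z₂ (L₁ L₂ : Filter ℕ), L₁.NeBot → L₂.NeBot → L₁ ≤ atTop → L₂ ≤ atTop →
      F z₁ = z₁ → F z₂ = z₂ →
      (∀ u, Tendsto (fun n => ⟪x n, u⟫) L₁ (𝓝 ⟪z₁, u⟫)) →
      (∀ u, Tendsto (fun n => ⟪x n, u⟫) L₂ (𝓝 ⟪z₂, u⟫)) → z₁ = z₂ := by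
    intro z₁ z₂ L₁ L₂ h₁ h₂ hle₁ hle₂ hf₁ hf₂ hc₁ hc₂
    obtain ⟨ℓ₁, hℓ₁⟩ := hDlim z₁ hf₁
    obtain ⟨ℓ₂, hℓ₂⟩ := hDlim z₂ hf₂
    set g : ℕ → ℝ := fun n => ‖x n - z₂‖ ^ 2 - ‖x n - z₁‖ ^ 2 with hgdef
    have hg : Tendsto g atTop (𝓝 (ℓ₂ - ℓ₁)) := hℓ₂.sub hℓ₁
    have hgeq : ∀ n, g n = ‖z₂‖ ^ 2 - ‖z₁‖ ^ 2 - 2 * ⟪x n, z₂ - z₁⟫ := by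
      intro n
      rw [hgdef]
      simp only [norm_sub_sq_real, inner_sub_right]
      ring
    have hlim : ∀ (z : H) (L : Filter ℕ), L.NeBot → L ≤ atTop →
        (∀ u, Tendsto (fun n => ⟪x n, u⟫) L (𝓝 ⟪z, u⟫)) →
        ℓ₂ - ℓ₁ = ‖z₂‖ ^ 2 - ‖z₁‖ ^ 2 - 2 * ⟪z, z₂ - z₁⟫ := by
      intro z L hL hle hc
      have t1 : Tendsto g L (𝓝 (ℓ₂ - ℓ₁)) := hg.mono_left hle
      have t2 : Tendsto g L (𝓝 (‖z₂‖ ^ 2 - ‖z₁‖ ^ 2 - 2 * ⟪z, z₂ - z₁⟫)) := by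
        have htt : Tendsto (fun n => ‖z₂‖ ^ 2 - ‖z₁‖ ^ 2 - 2 * ⟪x n, z₂ - z₁⟫) L
            (𝓝 (‖z₂‖ ^ 2 - ‖z₁‖ ^ 2 - 2 * ⟪z, z₂ - z₁⟫)) :=
          (tendsto_const_nhds (x := ‖z₂‖ ^ 2 - ‖z₁‖ ^ 2)).sub ((hc (z₂ - z₁)).const_mul 2)
        simp only [← hgeq] at htt
        exact htt
      exact tendsto_nhds_unique t1 t2
    have e₁ := hlim z₁ L₁ h₁ hle₁ hc₁
    have e₂ := hlim z₂ L₂ h₂ hle₂ hc₂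
    have hinner : ⟪z₂ - z₁, z₂ - z₁⟫ = 0 := by
      rw [inner_sub_left]
      linarith
    have : z₂ - z₁ = 0 := inner_self_eq_zero.mp hinner
    rw [sub_eq_zero] at this
    exact this.symm
  -- main argument
  obtain ⟨p, Lp, hLpne, hLple, hclp⟩ := exists_weak_clusterPt x B hb atTop atTop_neBot
  have hpfix : F p = p := hdemi Lp hLpne hLple p hclp
  refine ⟨p, hpfix, fun u => ?_⟩
  by_contra hcon
  rw [Metric.tendsto_atTop] at hcon
  push_neg at hcon
  obtain ⟨ε, hε, hfreq⟩ := hcon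
  have hfreq' : ∃ᶠ n in atTop, ε ≤ dist ⟪x n, u⟫ ⟪p, u⟫ := by
    rw [frequently_atTop]
    intro N
    obtain ⟨n, hn1, hn2⟩ := hfreq N
    exact ⟨n, hn1, hn2⟩
  have hne2 : (atTop ⊓ 𝓟 {n | ε ≤ dist ⟪x n, u⟫ ⟪p, u⟫}).NeBot :=
    Filter.frequently_iff_neBot.mp hfreq'
  obtain ⟨z₂, L₂, hL₂ne, hL₂le, hcl₂⟩ := exists_weak_clusterPt x B hb _ hne2
  have hL₂at : L₂ ≤ atTop := hL₂le.trans inf_le_left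
  have hz₂fix : F z₂ = z₂ := hdemi L₂ hL₂ne hL₂at z₂ hcl₂
  have hzp : z₂ = p := huniq z₂ p L₂ Lp hL₂ne hLpne hL₂at hLple hz₂fix hpfix hcl₂ hclp
  have h1 : ∀ᶠ n in L₂, dist ⟪x n, u⟫ ⟪p, u⟫ < ε := by
    have := (Metric.tendsto_nhds.mp (hcl₂ u)) ε hε
    rw [hzp] at this
    exact this
  have h2 : ∀ᶠ n in L₂, ε ≤ dist ⟪x n, u⟫ ⟪p, u⟫ := by
    apply hL₂le
    exact mem_inf_of_right (mem_principal_self _)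
  obtain ⟨n, hn1, hn2⟩ := (h1.and h2).exists
  linarith

end Hilbert


set_option synthInstance.maxHeartbeats 1000000 in
/-- For `m ≥ 3` and equal weights `1/m`, under the compatibility
hypothesis relating `Q i` and `T i`, the iterates `x_{n+1} = (J ∘ R) x_n`
converge weakly to a point `p ∈ S`, and the averages `(1/m) ∑ i, x_n i` converge
weakly to `(1/m) ∑ i, p i`, which is a fixed point of the averaged resolvent. -/
theorem weak_convergence_of_JR_iterates
    {X : Type*} [NormedAddCommGroup X] [InnerProductSpace ℝ X] [CompleteSpace X]
    (m : ℕ) (hm : 3 ≤ m)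
    (T Q : Fin m → X → X)
    (hT : ∀ i x y, ‖T i x - T i y‖ ^ 2 + ‖(x - T i x) - (y - T i y)‖ ^ 2 ≤ ‖x - y‖ ^ 2)
    (hQ : ∀ i x y, ‖Q i x - Q i y‖ ^ 2 + ‖(x - Q i x) - (y - Q i y)‖ ^ 2 ≤ ‖x - y‖ ^ 2)
    (hTQ : ∀ (i : Fin m) (z y : X),
      y = Q i z ↔ y = T i ((((m : ℝ) - 1) / m) • z + (1 / m : ℝ) • y))
    (R J : PiLp 2 (fun _ : Fin m => X) → PiLp 2 (fun _ : Fin m => X))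
    (hR : ∀ x i, R x i = ((m : ℝ) - 1)⁻¹ • ∑ j ∈ Finset.univ.erase i, x j)
    (hJ : ∀ x i, J x i = Q i (x i))
    (x : ℕ → PiLp 2 (fun _ : Fin m => X))
    (hrec : ∀ n, x (n + 1) = J (R (x n)))
    (hS : ∃ p : Fin m → X, ∀ i, p i = T i ((1 / m : ℝ) • ∑ j, p j)) :
    ∃ p : PiLp 2 (fun _ : Fin m => X),
      (∀ i, p i = T i ((1 / m : ℝ) • ∑ j, p j)) ∧
      (∀ u : PiLp 2 (fun _ : Fin m => X),
        Filter.Tendsto (fun n => (inner ℝ (x n) u : ℝ)) Filter.atTop (nhds (inner ℝ p u))) ∧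
      (∀ u : X,
        Filter.Tendsto (fun n => (inner ℝ ((1 / m : ℝ) • ∑ i, x n i) u : ℝ)) Filter.atTop
          (nhds (inner ℝ ((1 / m : ℝ) • ∑ i, p i) u))) ∧
      ((1 / m : ℝ) • ∑ i, p i) = (1 / m : ℝ) • ∑ i, T i ((1 / m : ℝ) • ∑ j, p j) := by
  classical
  have hm3 : (3 : ℝ) ≤ (m : ℝ) := by exact_mod_cast hm
  have hm0 : (m : ℝ) ≠ 0 := by linarith
  have hm1 : ((m : ℝ) - 1) ≠ 0 := by linarith
  have hm1pos : (0 : ℝ) < (m : ℝ) - 1 := by linarith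
  have hinvnn : (0 : ℝ) ≤ ((m : ℝ) - 1)⁻¹ := le_of_lt (inv_pos.mpr hm1pos)
  set c : ℝ := ((m : ℝ) - 2) / m with hc
  have hcpos : 0 < c := by
    rw [hc]; apply div_pos <;> linarith
  have hc1 : c ≤ 1 := by
    rw [hc, div_le_one (by linarith)]; linarith
  -- firm nonexpansiveness of J on the product space
  have hJfirm : ∀ a b : PiLp 2 (fun _ : Fin m => X),
      ‖J a - J b‖ ^ 2 + ‖(a - J a) - (b - J b)‖ ^ 2 ≤ ‖a - b‖ ^ 2 := by
    intro a b
    rw [PiLp.norm_sq_eq_of_L2, PiLp.norm_sq_eq_of_L2, PiLp.norm_sq_eq_of_L2,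
      ← Finset.sum_add_distrib]
    apply Finset.sum_le_sum
    intro i _
    have h := hQ i (a i) (b i)
    simpa [hJ] using h
  -- the key exact identity for R
  have hReq : ∀ a b : PiLp 2 (fun _ : Fin m => X),
      ‖R a - R b‖ ^ 2 + c * ‖(a - b) - (R a - R b)‖ ^ 2 = ‖a - b‖ ^ 2 := by
    intro a b
    set d : PiLp 2 (fun _ : Fin m => X) := a - b with hd
    set s : X := ∑ j, d j with hs
    set t : ℝ := ‖s‖ ^ 2 with ht
    have hcomp : ∀ i, (R a - R b) i = ((m : ℝ) - 1)⁻¹ • (s - d i) := by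
      intro i
      have : (R a - R b) i = R a i - R b i := rfl
      rw [this, hR, hR, ← smul_sub, ← Finset.sum_sub_distrib]
      congr 1
      rw [hs]
      rw [← Finset.sum_erase_eq_sub (Finset.mem_univ i)]
      rfl
    have hcomp2 : ∀ i, d i - (R a - R b) i = ((m : ℝ) - 1)⁻¹ • ((m : ℝ) • d i - s) := by
      intro i
      rw [hcomp i]
      match_scalars <;> field_simp <;> ring
    have h1 : ‖R a - R b‖ ^ 2 = ∑ i, (((m : ℝ) - 1)⁻¹) ^ 2 * ‖s - d i‖ ^ 2 := by
      rw [PiLp.norm_sq_eq_of_L2]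
      refine Finset.sum_congr rfl fun i _ => ?_
      rw [hcomp i, norm_smul, mul_pow, Real.norm_eq_abs, abs_of_nonneg hinvnn]
    have h2 : ‖(a - b) - (R a - R b)‖ ^ 2
        = ∑ i, (((m : ℝ) - 1)⁻¹) ^ 2 * ‖(m : ℝ) • d i - s‖ ^ 2 := by
      rw [PiLp.norm_sq_eq_of_L2]
      refine Finset.sum_congr rfl fun i _ => ?_
      have : ((a - b) - (R a - R b)) i = d i - (R a - R b) i := rfl
      rw [this, hcomp2 i, norm_smul, mul_pow, Real.norm_eq_abs, abs_of_nonneg hinvnn]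
    have h3 : ‖a - b‖ ^ 2 = ∑ i, ‖d i‖ ^ 2 := by
      rw [← hd, PiLp.norm_sq_eq_of_L2]
    rw [h1, h2, h3]
    have e1 : ∀ i : Fin m, ‖s - d i‖ ^ 2 = t - 2 * ⟪s, d i⟫ + ‖d i‖ ^ 2 := by
      intro i; rw [norm_sub_sq_real, ht]
    have e2 : ∀ i : Fin m, ‖(m : ℝ) • d i - s‖ ^ 2
        = (m : ℝ) ^ 2 * ‖d i‖ ^ 2 - 2 * (m : ℝ) * ⟪s, d i⟫ + t := by
      intro i
      rw [norm_sub_sq_real, norm_smul, mul_pow, Real.norm_eq_abs, sq_abs,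
        real_inner_smul_left, real_inner_comm, ht]
      ring
    simp only [e1, e2]
    have hsum_u : ∑ i, ⟪s, d i⟫ = t := by
      rw [← inner_sum, ← hs, ht, real_inner_self_eq_norm_sq]
    have hsum_t : ∑ _i : Fin m, t = (m : ℝ) * t := by
      rw [Finset.sum_const, Finset.card_univ, Fintype.card_fin, nsmul_eq_mul]
    set V : ℝ := ∑ i, ‖d i‖ ^ 2 with hV
    have hA : ∑ i, (((m : ℝ) - 1)⁻¹) ^ 2 * (t - 2 * ⟪s, d i⟫ + ‖d i‖ ^ 2)
        = (((m : ℝ) - 1)⁻¹) ^ 2 * ((m : ℝ) * t - 2 * t + V) := by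
      rw [← Finset.mul_sum]
      congr 1
      rw [Finset.sum_add_distrib, Finset.sum_sub_distrib, ← Finset.mul_sum, hsum_u, hsum_t, hV]
    have hB : ∑ i, (((m : ℝ) - 1)⁻¹) ^ 2 * ((m : ℝ) ^ 2 * ‖d i‖ ^ 2 - 2 * (m : ℝ) * ⟪s, d i⟫ + t)
        = (((m : ℝ) - 1)⁻¹) ^ 2 * ((m : ℝ) ^ 2 * V - 2 * (m : ℝ) * t + (m : ℝ) * t) := by
      rw [← Finset.mul_sum]
      congr 1
      rw [Finset.sum_add_distrib, Finset.sum_sub_distrib, ← Finset.mul_sum, ← Finset.mul_sum,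
        hsum_u, hsum_t, hV]
    rw [hA, hB, hc]
    field_simp
    ring
  -- the averagedness inequality for F = J ∘ R
  set κ : ℝ := c / 2 with hκdef
  have hκpos : 0 < κ := by rw [hκdef]; linarith
  set F : PiLp 2 (fun _ : Fin m => X) → PiLp 2 (fun _ : Fin m => X) := fun a => J (R a) with hF
  have hFstar : ∀ a b, ‖F a - F b‖ ^ 2 + κ * ‖(a - F a) - (b - F b)‖ ^ 2 ≤ ‖a - b‖ ^ 2 := by
    intro a b
    have h1 := hJfirm (R a) (R b)
    have h1' : ‖F a - F b‖ ^ 2 + ‖(R a - R b) - (F a - F b)‖ ^ 2 ≤ ‖R a - R b‖ ^ 2 := by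
      have he : (R a - J (R a)) - (R b - J (R b)) = (R a - R b) - (J (R a) - J (R b)) := by abel
      rw [he] at h1
      exact h1
    have h2 := hReq a b
    have h3 : ‖(a - b) - (F a - F b)‖
        ≤ ‖(a - b) - (R a - R b)‖ + ‖(R a - R b) - (F a - F b)‖ := by
      have he : (a - b) - (F a - F b)
          = ((a - b) - (R a - R b)) + ((R a - R b) - (F a - F b)) := by abel
      rw [he]
      exact norm_add_le _ _
    have he2 : (a - F a) - (b - F b) = (a - b) - (F a - F b) := by abel
    rw [he2, hκdef]
    nlinarith [norm_nonneg ((a - b) - (R a - R b)), norm_nonneg ((R a - R b) - (F a - F b)),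
      norm_nonneg ((a - b) - (F a - F b)),
      sq_nonneg (‖(a - b) - (R a - R b)‖ - ‖(R a - R b) - (F a - F b)‖),
      pow_le_pow_left₀ (norm_nonneg ((a - b) - (F a - F b))) h3 2]
  -- fixed points of F are exactly the points of S
  have hcomb : ∀ p : PiLp 2 (fun _ : Fin m => X), ∀ i,
      (((m : ℝ) - 1) / m) • (R p i) + (1 / m : ℝ) • p i = (1 / m : ℝ) • ∑ j, p j := by
    intro p i
    rw [hR, smul_smul]
    have hcoef : ((m : ℝ) - 1) / m * ((m : ℝ) - 1)⁻¹ = 1 / m := by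
      field_simp
    rw [hcoef, Finset.sum_erase_eq_sub (Finset.mem_univ i), smul_sub]
    abel
  have hfixS : ∀ p : PiLp 2 (fun _ : Fin m => X),
      F p = p ↔ ∀ i, p i = T i ((1 / m : ℝ) • ∑ j, p j) := by
    intro p
    constructor
    · intro hfix i
      have hQi : p i = Q i (R p i) := by
        rw [← hJ]
        have h := hfix
        rw [hF] at h
        exact (congrArg (fun v : PiLp 2 (fun _ : Fin m => X) => v i) h).symm
      have := (hTQ i (R p i) (p i)).mp hQi
      rwa [hcomb p i] at this
    · intro hp
      rw [WithLp.ext_iff]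
      funext i
      show J (R p) i = p i
      rw [hJ]
      exact ((hTQ i (R p i) (p i)).mpr (by rw [hcomb p i]; exact hp i)).symm
  -- the fixed point coming from hS
  obtain ⟨p₀, hp₀⟩ := hS
  set q : PiLp 2 (fun _ : Fin m => X) := (WithLp.equiv 2 (∀ _ : Fin m, X)).symm p₀ with hq
  have hqfix : F q = q := (hfixS q).mpr fun i => hp₀ i
  -- apply the abstract convergence theorem
  haveI hcompl : CompleteSpace (PiLp 2 fun _ : Fin m => X) := by
    have hueq : PiLp 2 (fun _ : Fin m => X) ≃ᵤ (∀ _ : Fin m, X) :=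
      { toEquiv := WithLp.equiv 2 _
        uniformContinuous_toFun := PiLp.uniformContinuous_ofLp 2 _
        uniformContinuous_invFun := PiLp.uniformContinuous_toLp 2 _ }
    exact hueq.completeSpace_iff.mpr inferInstance
  obtain ⟨p, hpfix, hpconv⟩ :=
    weak_conv_of_averaged F κ hκpos hFstar q hqfix x (fun n => hrec n)
  have hpS : ∀ i, p i = T i ((1 / m : ℝ) • ∑ j, p j) := (hfixS p).mp hpfix
  refine ⟨p, hpS, hpconv, ?_, ?_⟩
  · intro u
    set U : PiLp 2 (fun _ : Fin m => X) := (WithLp.equiv 2 (∀ _ : Fin m, X)).symm (fun _ => u)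
      with hU
    have key : ∀ y : PiLp 2 (fun _ : Fin m => X),
        ⟪(1 / m : ℝ) • ∑ i, y i, u⟫ = (1 / m : ℝ) * ⟪y, U⟫ := by
      intro y
      rw [real_inner_smul_left, PiLp.inner_apply, sum_inner]
      simp [hU, WithLp.equiv_symm_apply, PiLp.toLp_apply]
    simp only [key]
    exact (hpconv U).const_mul (1 / m : ℝ)
  · congr 1
    exact Finset.sum_congr rfl fun i _ => hpS i
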